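/- Let n₋, n₀, n₊ be natural numbers, B₊ a real n₀ × n₊ matrix, B₋ a real n₋ × n₀ matrix, and W₋, W₀, W₊ diagonal matrices of sizes n₋, n₀, n₊ respectively with strictly positive diagonal entries. Let φ : ℝ → ℝ be continuous, F : ℝ → ℝ a differentiable function with F' = φ, and ω ∈ ℝ^{n₀}. Define the energy E : ℝ^{n₀} → ℝ by E(θ) = −⟨ω, W₀θ⟩ + Σ_{i=1}^{n₊} (W₊ F(B₊ᵀθ))_i + Σ_{j=1}^{n₋} (W₋⁻¹ F(B₋ W₀ θ))_j, where F is applied componentwise. Then the vector field G(θ) = ω − [W₀⁻¹ B₊ W₊ φ(B₊ᵀθ) + B₋ᵀ W₋⁻¹ φ(B₋ W₀ θ)] satisfies G(θ) = −W₀⁻¹ ∇E(θ) for all θ ∈ ℝ^{n₀}; that is, the nonlinear simplicial flow at an intermediate dimension is a rescaled downhill gradient flow. -/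

import Mathlib

open Matrix BigOperators

lemma hasFDerivAt_inner_sum {n : ℕ} (v θ : EuclideanSpace ℝ (Fin n)) :
    HasFDerivAt (fun θ : EuclideanSpace ℝ (Fin n) => ∑ k, v k * θ k)
      (innerSL ℝ v) θ := by
  have h : (fun θ : EuclideanSpace ℝ (Fin n) => ∑ k, v k * θ k) = (innerSL ℝ v) := by
    funext w
    simp [PiLp.inner_apply, RCLike.inner_apply]
    exact Finset.sum_congr rfl fun _ _ => mul_comm _ _
  rw [h]
  exact (innerSL ℝ v).hasFDerivAt

lemma hasFDerivAt_F_inner {n : ℕ} (v θ : EuclideanSpace ℝ (Fin n)) (c : ℝ)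
    (F φ : ℝ → ℝ) (hF : Differentiable ℝ F) (hF' : deriv F = φ) :
    HasFDerivAt (fun θ : EuclideanSpace ℝ (Fin n) => c * F (∑ k, v k * θ k))
      ((c * φ (∑ k, v k * θ k)) • (innerSL ℝ v)) θ := by
  have hD : HasDerivAt F (φ (∑ k, v k * θ k)) (∑ k, v k * θ k) := by
    have h := (hF (∑ k, v k * θ k)).hasDerivAt
    rwa [hF'] at h
  have h := (hD.comp_hasFDerivAt θ (hasFDerivAt_inner_sum v θ)).const_mul c
  simpa [smul_smul] using h

/-- The nonlinear simplicial flow at an intermediate dimension is a rescaled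
downhill gradient flow: with boundary matrices `B₊` (dimension d+1 → d) and `B₋`
(dimension d → d−1), positive diagonal weight matrices `W₋, W₀, W₊`, a continuous
nonlinearity `φ` with antiderivative `F`, a forcing `ω`, and energy
`E θ = −⟨ω, W₀θ⟩ + Σ (W₊ F(B₊ᵀθ))ᵢ + Σ (W₋⁻¹ F(B₋W₀θ))ⱼ`,
the vector field `G θ = ω − [W₀⁻¹B₊W₊φ(B₊ᵀθ) + B₋ᵀW₋⁻¹φ(B₋W₀θ)]` satisfies
`G θ = −W₀⁻¹ ∇E(θ)`. -/
theorem simplicial_flow_is_rescaled_gradient_flow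
    (nm n0 np : ℕ)
    (Bp : Matrix (Fin n0) (Fin np) ℝ) (Bm : Matrix (Fin nm) (Fin n0) ℝ)
    (wm : Fin nm → ℝ) (w0 : Fin n0 → ℝ) (wp : Fin np → ℝ)
    (hwm : ∀ i, 0 < wm i) (hw0 : ∀ i, 0 < w0 i) (hwp : ∀ i, 0 < wp i)
    (φ F : ℝ → ℝ) (hφ : Continuous φ) (hF : Differentiable ℝ F) (hF' : deriv F = φ)
    (ω : Fin n0 → ℝ)
    (E : EuclideanSpace ℝ (Fin n0) → ℝ)
    (hE : ∀ θ : EuclideanSpace ℝ (Fin n0),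
      E θ = -(ω ⬝ᵥ (Matrix.diagonal w0).mulVec θ)
        + ∑ i, ((Matrix.diagonal wp).mulVec (fun i => F (Bp.transpose.mulVec θ i))) i
        + ∑ j, ((Matrix.diagonal fun j => (wm j)⁻¹).mulVec
            (fun j => F (Bm.mulVec ((Matrix.diagonal w0).mulVec θ) j))) j) :
    ∀ θ : EuclideanSpace ℝ (Fin n0),
      ω - ((Matrix.diagonal fun i => (w0 i)⁻¹).mulVec
            (Bp.mulVec ((Matrix.diagonal wp).mulVec fun i => φ (Bp.transpose.mulVec θ i)))
          + Bm.transpose.mulVec ((Matrix.diagonal fun j => (wm j)⁻¹).mulVec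
            fun j => φ (Bm.mulVec ((Matrix.diagonal w0).mulVec θ) j)))
        = -((Matrix.diagonal fun i => (w0 i)⁻¹).mulVec ((gradient E θ : EuclideanSpace ℝ (Fin n0)))) := by
  intro θ
  -- notation
  set a : EuclideanSpace ℝ (Fin n0) := WithLp.toLp 2 (fun k => -(ω k * w0 k)) with ha
  set v : Fin np → EuclideanSpace ℝ (Fin n0) := fun i => WithLp.toLp 2 (fun k => Bp k i) with hv
  set u : Fin nm → EuclideanSpace ℝ (Fin n0) := fun j => WithLp.toLp 2 (fun k => Bm j k * w0 k) with hu
  -- E rewritten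
  have hEeq : E = fun θ : EuclideanSpace ℝ (Fin n0) =>
      (∑ k, a k * θ k) + (∑ i, wp i * F (∑ k, v i k * θ k))
        + (∑ j, (wm j)⁻¹ * F (∑ k, u j k * θ k)) := by
    funext θ'
    rw [hE θ']
    simp [ha, hv, hu, Matrix.mulVec, dotProduct, Matrix.transpose_apply,
      Matrix.diagonal_apply, ite_mul, mul_ite, mul_assoc, neg_mul,
      Finset.sum_neg_distrib, Finset.mul_sum]
  -- gradient
  set g : EuclideanSpace ℝ (Fin n0) := WithLp.toLp 2 (fun k => a k
      + (∑ i, (wp i * φ (∑ k', v i k' * θ k')) * v i k)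
      + (∑ j, ((wm j)⁻¹ * φ (∑ k', u j k' * θ k')) * u j k)) with hg
  have hD : HasFDerivAt E
      ((innerSL ℝ a)
        + (∑ i, (wp i * φ (∑ k, v i k * θ k)) • (innerSL ℝ (v i)))
        + (∑ j, ((wm j)⁻¹ * φ (∑ k, u j k * θ k)) • (innerSL ℝ (u j)))) θ := by
    rw [hEeq]
    exact ((hasFDerivAt_inner_sum a θ).add
        (HasFDerivAt.fun_sum fun i _ => hasFDerivAt_F_inner (v i) θ (wp i) F φ hF hF')).add
      (HasFDerivAt.fun_sum fun j _ => hasFDerivAt_F_inner (u j) θ ((wm j)⁻¹) F φ hF hF')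
  have hGrad : gradient E θ = g := by
    apply HasGradientAt.gradient
    rw [hasGradientAt_iff_hasFDerivAt]
    convert hD using 1
    rfl
    rfl
    apply ContinuousLinearMap.ext
    intro w
    simp only [InnerProductSpace.toDual_apply_apply, PiLp.inner_apply, RCLike.inner_apply,
      conj_trivial, ContinuousLinearMap.add_apply, ContinuousLinearMap.sum_apply,
      ContinuousLinearMap.smul_apply, innerSL_apply_apply, smul_eq_mul, hg]
    simp only [add_mul, mul_add, Finset.sum_add_distrib, Finset.sum_mul, Finset.mul_sum]
    congr 1
    · congr 1
      rw [Finset.sum_comm]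
      exact Finset.sum_congr rfl fun i _ => Finset.sum_congr rfl fun k _ => by ring
    · rw [Finset.sum_comm]
      exact Finset.sum_congr rfl fun j _ => Finset.sum_congr rfl fun k _ => by ring
  funext k
  simp only [Pi.sub_apply, Pi.add_apply, Pi.neg_apply, hGrad, hg, ha, hv, hu]
  simp [Matrix.mulVec, dotProduct, Matrix.transpose_apply,
    Matrix.diagonal_apply, ite_mul, mul_ite, mul_assoc]
  have e1 : ∑ x : Fin np, wp x * (φ (∑ x_1, Bp x_1 x * θ x_1) * Bp k x)
      = ∑ x : Fin np, Bp k x * (wp x * φ (∑ x_1, Bp x_1 x * θ x_1)) :=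
    Finset.sum_congr rfl fun x _ => by ring
  have e2 : ∑ x : Fin nm, (wm x)⁻¹ * (φ (∑ x_1, Bm x x_1 * (w0 x_1 * θ x_1)) * (Bm x k * w0 k))
      = w0 k * ∑ x : Fin nm, Bm x k * ((wm x)⁻¹ * φ (∑ x_1, Bm x x_1 * (w0 x_1 * θ x_1))) := by
    rw [Finset.mul_sum]; exact Finset.sum_congr rfl fun x _ => by ring
  rw [e1, e2]
  have h0 : w0 k ≠ 0 := (hw0 k).ne'
  field_simp
  ring
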